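/- The Von Neumann entropy of the star graph K_{1,n-1} under the symmetric normalized Laplacian equals log n - (2/n) log 2, and the difference log(n-1) - (log n - (2/n) log 2) tends to 0 as n → ∞; i.e., the star graph asymptotically achieves the maximum entropy log(n-1). -/

import Mathlib

open Real BigOperators Finset Matrix SimpleGraph

noncomputable def nLap {V : Type*} [Fintype V] [DecidableEq V]
    (G : SimpleGraph V) [DecidableRel G.Adj] : Matrix V V ℝ :=
  Matrix.diagonal (fun v => 1 / Real.sqrt (G.degree v : ℝ)) *
    (Matrix.diagonal (fun v => (G.degree v : ℝ)) - G.adjMatrix ℝ) *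
    Matrix.diagonal (fun v => 1 / Real.sqrt (G.degree v : ℝ))

private lemma trace_eq_sum_eig {m : Type*} [Fintype m] [DecidableEq m] {A : Matrix m m ℝ}
    (hA : A.IsHermitian) : A.trace = ∑ i, hA.eigenvalues i := by
  conv_lhs => rw [hA.spectral_theorem, Unitary.conjStarAlgAut_apply]
  rw [Matrix.trace_mul_cycle]
  rw [(Matrix.mem_unitaryGroup_iff').mp (hA.eigenvectorUnitary).2]
  simp [Matrix.trace_diagonal]

private lemma trace_sq_eq_sum_eig {m : Type*} [Fintype m] [DecidableEq m] {A : Matrix m m ℝ}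
    (hA : A.IsHermitian) : (A * A).trace = ∑ i, (hA.eigenvalues i)^2 := by
  have hu : (star (hA.eigenvectorUnitary : Matrix m m ℝ)) * (hA.eigenvectorUnitary : Matrix m m ℝ) = 1 :=
    (Matrix.mem_unitaryGroup_iff').mp (hA.eigenvectorUnitary).2
  conv_lhs => rw [hA.spectral_theorem, Unitary.conjStarAlgAut_apply]
  set U := (hA.eigenvectorUnitary : Matrix m m ℝ)
  set D := diagonal (RCLike.ofReal ∘ hA.eigenvalues : m → ℝ)
  have h2 : (U * D * star U) * (U * D * star U) = U * (D * D) * star U := by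
    calc (U * D * star U) * (U * D * star U) = U * D * (star U * U) * D * star U := by
          simp only [Matrix.mul_assoc]
      _ = U * (D * D) * star U := by rw [hu]; simp only [Matrix.mul_one, Matrix.mul_assoc]
  rw [h2, Matrix.trace_mul_cycle, ← Matrix.mul_assoc, hu, Matrix.one_mul]
  simp [D, Matrix.diagonal_mul_diagonal, Matrix.trace_diagonal, pow_two]

private lemma cubic_zero {V : Type*} [Fintype V] [DecidableEq V] (A M : Matrix V V ℝ) (a b s : ℝ)
    (hM : M = a • 1 + b • A) (hA3 : A * A * A = s • A) (hco : b^3 * s - a^2 * b = 0)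
    (h2 : a + a = 2 * a) :
    M * (M - a • 1) * (M - (2*a) • 1) = 0 := by
  have e1 : M - a • 1 = b • A := by rw [hM]; abel
  have e2 : M - (2*a) • 1 = (-a) • 1 + b • A := by rw [hM, ← h2]; module
  rw [e1, e2, hM]
  simp only [add_mul, mul_add, Matrix.smul_mul, Matrix.mul_smul, Matrix.one_mul, Matrix.mul_one,
    smul_smul, smul_add]
  rw [hA3, smul_smul]
  have hc1 : -a*(b*a) = -(b*(b*b)*s) := by linear_combination hco
  rw [hc1]
  module

private lemma eig_mem {m : Type*} [Fintype m] [DecidableEq m] {M : Matrix m m ℝ}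
    (hH : M.IsHermitian) (a : ℝ)
    (key : M * (M - a • 1) * (M - (2*a) • 1) = 0) (i : m) :
    hH.eigenvalues i = 0 ∨ hH.eigenvalues i = a ∨ hH.eigenvalues i = 2*a := by
  set lam := hH.eigenvalues i with hlam
  have hv : M *ᵥ ⇑(hH.eigenvectorBasis i) = lam • ⇑(hH.eigenvectorBasis i) :=
    hH.mulVec_eigenvectorBasis i
  have hvne : ⇑(hH.eigenvectorBasis i) ≠ 0 := by
    have h := hH.eigenvectorBasis.orthonormal.ne_zero i
    intro hc; apply h; ext x; exact congrFun hc x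
  have h0 : (M * (M - a • 1) * (M - (2*a) • 1)) *ᵥ ⇑(hH.eigenvectorBasis i) = 0 := by
    rw [key, Matrix.zero_mulVec]
  have hsub : ∀ t : ℝ, (M - t • 1) *ᵥ ⇑(hH.eigenvectorBasis i)
      = (lam - t) • ⇑(hH.eigenvectorBasis i) := by
    intro t
    rw [Matrix.sub_mulVec, hv, Matrix.smul_mulVec, Matrix.one_mulVec, sub_smul]
  rw [← Matrix.mulVec_mulVec, ← Matrix.mulVec_mulVec, hsub, Matrix.mulVec_smul, hsub,
    smul_smul, Matrix.mulVec_smul, hv, smul_smul] at h0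
  have hscal : (lam - 2*a) * ((lam - a) * lam) = 0 := by
    rcases smul_eq_zero.mp h0 with h | h
    · rw [mul_assoc] at h; exact h
    · exact absurd (by ext x; exact congrFun h x) hvne
  rcases mul_eq_zero.mp hscal with h | h
  · right; right; linarith [sub_eq_zero.mp h]
  · rcases mul_eq_zero.mp h with h' | h'
    · right; left; linarith [sub_eq_zero.mp h']
    · left; exact h'

private lemma sum_three_vals {m : Type*} [Fintype m] [DecidableEq m] (f : m → ℝ) (a : ℝ)
    (hmem : ∀ i, f i = 0 ∨ f i = a ∨ f i = 2*a)
    (F : ℝ → ℝ) (hF0 : F 0 = 0) :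
    ∑ i, F (f i) =
      ((Finset.univ.filter (fun i => f i = a)).card : ℝ) * F a +
      ((Finset.univ.filter (fun i => ¬ f i = a ∧ f i = 2*a)).card : ℝ) * F (2*a) := by
  classical
  rw [← Finset.sum_filter_add_sum_filter_not Finset.univ (fun i => f i = a)]
  congr 1
  · rw [Finset.sum_congr rfl (fun i hi => by rw [(Finset.mem_filter.mp hi).2]),
      Finset.sum_const, nsmul_eq_mul]
  · rw [← Finset.sum_filter_add_sum_filter_not (Finset.univ.filter (fun i => ¬ f i = a))
      (fun i => f i = 2*a), Finset.filter_filter, Finset.filter_filter]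
    have h3 : ∑ i ∈ Finset.univ.filter (fun i => ¬ f i = a ∧ f i = 2*a), F (f i)
        = ((Finset.univ.filter (fun i => ¬ f i = a ∧ f i = 2*a)).card : ℝ) * F (2*a) := by
      rw [Finset.sum_congr rfl (fun i hi => by rw [(Finset.mem_filter.mp hi).2.2]),
        Finset.sum_const, nsmul_eq_mul]
    have h4 : ∑ i ∈ Finset.univ.filter (fun i => ¬ f i = a ∧ ¬ f i = 2*a), F (f i) = 0 := by
      apply Finset.sum_eq_zero
      intro i hi
      obtain ⟨-, hnp, hnq⟩ := Finset.mem_filter.mp hi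
      rcases hmem i with h | h | h
      · rw [h, hF0]
      · exact absurd h hnp
      · exact absurd h hnq
    rw [h3, h4, add_zero]

private lemma entropy_calc {m : Type*} [Fintype m] [DecidableEq m] {M : Matrix m m ℝ}
    (hH : M.IsHermitian) {n : ℝ} (hn : 2 ≤ n)
    (key : M * (M - n⁻¹ • 1) * (M - (2*n⁻¹) • 1) = 0)
    (htr : M.trace = 1) (htr2 : (M * M).trace = (n+2)/n^2) :
    -∑ i, hH.eigenvalues i * Real.log (hH.eigenvalues i)
      = Real.log n - (2/n) * Real.log 2 := by
  have hn0 : n ≠ 0 := by intro h; rw [h] at hn; norm_num at hn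
  have hnpos : 0 < n := by linarith
  have heig : ∀ i, hH.eigenvalues i = 0 ∨ hH.eigenvalues i = n⁻¹ ∨
      hH.eigenvalues i = 2*n⁻¹ := eig_mem hH n⁻¹ key
  rw [trace_eq_sum_eig hH] at htr
  rw [trace_sq_eq_sum_eig hH] at htr2
  have e1 := sum_three_vals hH.eigenvalues n⁻¹ heig (fun x => x) rfl
  have e2 := sum_three_vals hH.eigenvalues n⁻¹ heig (fun x => x^2) (by norm_num)
  rw [htr] at e1
  rw [htr2] at e2
  set Sc : ℝ := ((Finset.univ.filter (fun i => hH.eigenvalues i = n⁻¹)).card : ℝ) with hScdef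
  set Tc : ℝ := ((Finset.univ.filter
    (fun i => ¬ hH.eigenvalues i = n⁻¹ ∧ hH.eigenvalues i = 2*n⁻¹)).card : ℝ) with hTcdef
  have h1 : Sc * n⁻¹ + Tc * (2*n⁻¹) = 1 := e1.symm
  have h2 : Sc * (n⁻¹)^2 + Tc * (2*n⁻¹)^2 = (n+2)/n^2 := e2.symm
  have hSc : Sc = n - 2 := by
    field_simp at h1 h2
    nlinarith [h1, h2]
  have hTc : Tc = 1 := by
    rw [hSc] at h1
    field_simp at h1
    linarith
  have efin := sum_three_vals hH.eigenvalues n⁻¹ heig (fun x => x * Real.log x) (by norm_num)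
  rw [efin, ← hScdef, ← hTcdef, hSc, hTc]
  have hlog1 : Real.log (n⁻¹) = -Real.log n := Real.log_inv n
  have hlog2 : Real.log (2*n⁻¹) = Real.log 2 - Real.log n := by
    rw [Real.log_mul (by norm_num) (by positivity), Real.log_inv]; ring
  rw [hlog1, hlog2]
  field_simp
  ring

section StarGraph

variable (n : ℕ) [inst : DecidableRel (completeBipartiteGraph (Fin 1) (Fin (n - 1))).Adj]

private lemma deg_left (hn : 2 ≤ n) (i : Fin 1) :
    (completeBipartiteGraph (Fin 1) (Fin (n - 1))).degree (Sum.inl i) = n - 1 := by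
  rw [SimpleGraph.degree, show (completeBipartiteGraph (Fin 1) (Fin (n - 1))).neighborFinset (Sum.inl i)
    = Finset.univ.map ⟨Sum.inr, Sum.inr_injective⟩ from ?_]
  · simp
  · ext w; cases w <;> simp

private lemma deg_right (hn : 2 ≤ n) (j : Fin (n-1)) :
    (completeBipartiteGraph (Fin 1) (Fin (n - 1))).degree (Sum.inr j) = 1 := by
  rw [SimpleGraph.degree, show (completeBipartiteGraph (Fin 1) (Fin (n - 1))).neighborFinset (Sum.inr j)
    = Finset.univ.map ⟨Sum.inl, Sum.inl_injective⟩ from ?_]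
  · simp
  · ext w; cases w <;> simp [Subsingleton.elim _ (0 : Fin 1)]

private lemma nLap_star (hn : 2 ≤ n) :
    nLap (completeBipartiteGraph (Fin 1) (Fin (n - 1))) =
      1 - (Real.sqrt ((n:ℝ)-1))⁻¹ • (completeBipartiteGraph (Fin 1) (Fin (n - 1))).adjMatrix ℝ := by
  have hcast : ((n - 1 : ℕ) : ℝ) = (n : ℝ) - 1 := by
    rw [Nat.cast_sub (by omega)]; norm_num
  have hnR : (2:ℝ) ≤ (n:ℝ) := by exact_mod_cast hn
  have hpos : (0:ℝ) < (n:ℝ) - 1 := by linarith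
  have hs0 : Real.sqrt ((n:ℝ)-1) ≠ 0 := by positivity
  ext u v
  rw [nLap, Matrix.mul_diagonal, Matrix.diagonal_mul, Matrix.sub_apply, Matrix.diagonal_apply,
    Matrix.sub_apply, Matrix.one_apply, Matrix.smul_apply]
  cases u <;> cases v <;>
    simp [deg_left n hn, deg_right n hn, hcast, SimpleGraph.adjMatrix_apply] <;>
    field_simp <;>
    rw [Real.sq_sqrt hpos.le, div_self hpos.ne']

private lemma adj_cube (hn : 2 ≤ n) :
    (completeBipartiteGraph (Fin 1) (Fin (n - 1))).adjMatrix ℝ *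
      (completeBipartiteGraph (Fin 1) (Fin (n - 1))).adjMatrix ℝ *
      (completeBipartiteGraph (Fin 1) (Fin (n - 1))).adjMatrix ℝ
    = ((n:ℝ) - 1) • (completeBipartiteGraph (Fin 1) (Fin (n - 1))).adjMatrix ℝ := by
  have hcast : ((n - 1 : ℕ) : ℝ) = (n : ℝ) - 1 := by
    rw [Nat.cast_sub (by omega)]; norm_num
  ext u v
  simp only [Matrix.mul_apply, Matrix.smul_apply, smul_eq_mul, Fintype.sum_sum_type]
  cases u <;> cases v <;>
    simp [SimpleGraph.adjMatrix_apply, hcast, Finset.mul_sum, Finset.sum_mul]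

private lemma key_star (hn : 2 ≤ n) :
    ((n:ℝ)⁻¹ • nLap (completeBipartiteGraph (Fin 1) (Fin (n - 1)))) *
      (((n:ℝ)⁻¹ • nLap (completeBipartiteGraph (Fin 1) (Fin (n - 1)))) - (n:ℝ)⁻¹ • 1) *
      (((n:ℝ)⁻¹ • nLap (completeBipartiteGraph (Fin 1) (Fin (n - 1)))) - (2*(n:ℝ)⁻¹) • 1) = 0 := by
  have hnR : (2:ℝ) ≤ (n:ℝ) := by exact_mod_cast hn
  have hpos : (0:ℝ) < (n:ℝ) - 1 := by linarith
  have hn0 : (n:ℝ) ≠ 0 := by positivity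
  have hc3 : ((Real.sqrt ((n:ℝ)-1))⁻¹)^2 = ((n:ℝ)-1)⁻¹ := by
    rw [inv_pow, Real.sq_sqrt hpos.le]
  have hcc : ((Real.sqrt ((n:ℝ)-1))⁻¹)^2 * ((n:ℝ)-1) = 1 := by
    rw [hc3]; field_simp
  apply cubic_zero ((completeBipartiteGraph (Fin 1) (Fin (n - 1))).adjMatrix ℝ) _
    ((n:ℝ)⁻¹) (-((Real.sqrt ((n:ℝ)-1))⁻¹ * (n:ℝ)⁻¹)) ((n:ℝ)-1)
  · rw [nLap_star n hn, smul_sub, smul_smul]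
    module
  · exact adj_cube n hn
  · linear_combination (-((Real.sqrt ((n:ℝ)-1))⁻¹) * ((n:ℝ)⁻¹)^3) * hcc
  · ring

private lemma card_V (hn : 2 ≤ n) : (Fintype.card (Fin 1 ⊕ Fin (n-1)) : ℝ) = n := by
  have hcast : ((n - 1 : ℕ) : ℝ) = (n : ℝ) - 1 := by
    rw [Nat.cast_sub (by omega)]; norm_num
  simp only [Fintype.card_sum, Fintype.card_fin, Nat.cast_add, Nat.cast_one, hcast]
  ring

private lemma trace_star (hn : 2 ≤ n) :
    ((n:ℝ)⁻¹ • nLap (completeBipartiteGraph (Fin 1) (Fin (n - 1)))).trace = 1 := by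
  have hn0 : (n:ℝ) ≠ 0 := by positivity
  rw [nLap_star n hn, smul_sub, smul_smul, Matrix.trace_sub, Matrix.trace_smul,
    Matrix.trace_smul, SimpleGraph.trace_adjMatrix, Matrix.trace_one, card_V n hn]
  simp only [smul_eq_mul, mul_zero, sub_zero]
  field_simp

private lemma trace_sq_star (hn : 2 ≤ n) :
    (((n:ℝ)⁻¹ • nLap (completeBipartiteGraph (Fin 1) (Fin (n - 1)))) *
     ((n:ℝ)⁻¹ • nLap (completeBipartiteGraph (Fin 1) (Fin (n - 1))))).trace
      = ((n:ℝ)+2)/(n:ℝ)^2 := by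
  have hcast : ((n - 1 : ℕ) : ℝ) = (n : ℝ) - 1 := by
    rw [Nat.cast_sub (by omega)]; norm_num
  have hnR : (2:ℝ) ≤ (n:ℝ) := by exact_mod_cast hn
  have hpos : (0:ℝ) < (n:ℝ) - 1 := by linarith
  have hn0 : (n:ℝ) ≠ 0 := by positivity
  have hc3 : ((Real.sqrt ((n:ℝ)-1))⁻¹)^2 = ((n:ℝ)-1)⁻¹ := by
    rw [inv_pow, Real.sq_sqrt hpos.le]
  have htrA2 : ((completeBipartiteGraph (Fin 1) (Fin (n - 1))).adjMatrix ℝ *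
      (completeBipartiteGraph (Fin 1) (Fin (n - 1))).adjMatrix ℝ).trace = 2*((n:ℝ)-1) := by
    rw [Matrix.trace]
    have hdiag : ∀ u, ((completeBipartiteGraph (Fin 1) (Fin (n - 1))).adjMatrix ℝ *
        (completeBipartiteGraph (Fin 1) (Fin (n - 1))).adjMatrix ℝ).diag u
        = ((completeBipartiteGraph (Fin 1) (Fin (n - 1))).degree u : ℝ) := fun u =>
      (completeBipartiteGraph (Fin 1) (Fin (n - 1))).adjMatrix_mul_self_apply_self u
    rw [Fintype.sum_congr _ _ hdiag, Fintype.sum_sum_type]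
    simp only [deg_left n hn, deg_right n hn, Finset.sum_const, Finset.card_univ,
      Fintype.card_fin, nsmul_eq_mul, Nat.cast_one, mul_one, hcast]
    ring
  rw [nLap_star n hn]
  have expand : ((n:ℝ)⁻¹ • (1 - (Real.sqrt ((n:ℝ)-1))⁻¹ •
        (completeBipartiteGraph (Fin 1) (Fin (n - 1))).adjMatrix ℝ)) *
      ((n:ℝ)⁻¹ • (1 - (Real.sqrt ((n:ℝ)-1))⁻¹ •
        (completeBipartiteGraph (Fin 1) (Fin (n - 1))).adjMatrix ℝ))
      = ((n:ℝ)⁻¹*(n:ℝ)⁻¹) • 1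
        + (-(2*((n:ℝ)⁻¹*(n:ℝ)⁻¹*(Real.sqrt ((n:ℝ)-1))⁻¹))) •
            (completeBipartiteGraph (Fin 1) (Fin (n - 1))).adjMatrix ℝ
        + ((n:ℝ)⁻¹*(n:ℝ)⁻¹*((Real.sqrt ((n:ℝ)-1))⁻¹*(Real.sqrt ((n:ℝ)-1))⁻¹)) •
            ((completeBipartiteGraph (Fin 1) (Fin (n - 1))).adjMatrix ℝ *
             (completeBipartiteGraph (Fin 1) (Fin (n - 1))).adjMatrix ℝ) := by
    simp only [Matrix.smul_mul, Matrix.mul_smul, mul_sub, sub_mul, Matrix.one_mul,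
      Matrix.mul_one, smul_sub, smul_smul, smul_add]
    module
  rw [expand, Matrix.trace_add, Matrix.trace_add, Matrix.trace_smul, Matrix.trace_smul,
    Matrix.trace_smul, Matrix.trace_one, SimpleGraph.trace_adjMatrix, htrA2, card_V n hn]
  have hss : (Real.sqrt ((n:ℝ)-1))⁻¹*(Real.sqrt ((n:ℝ)-1))⁻¹ = ((n:ℝ)-1)⁻¹ := by
    rw [← pow_two, hc3]
  rw [hss]
  simp only [smul_eq_mul, mul_zero, add_zero]
  have h1 : ((n:ℝ)-1) ≠ 0 := ne_of_gt hpos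
  field_simp

end StarGraph

/-- The Von Neumann entropy of the star graph K_{1,n-1} equals
log n - (2/n) log 2, and the gap to the maximum entropy log(n-1) tends to 0 as
n → ∞. -/
theorem stmt_19 (n : ℕ) (hn : 2 ≤ n)
    [DecidableRel (completeBipartiteGraph (Fin 1) (Fin (n - 1))).Adj]
    (hH : (((n : ℝ)⁻¹) • nLap (completeBipartiteGraph (Fin 1) (Fin (n - 1)))).IsHermitian) :
    (-∑ i, hH.eigenvalues i * Real.log (hH.eigenvalues i) =
      Real.log (n : ℝ) - (2 / (n : ℝ)) * Real.log 2) ∧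
    Filter.Tendsto
      (fun m : ℕ => Real.log ((m : ℝ) - 1) - (Real.log (m : ℝ) - (2 / (m : ℝ)) * Real.log 2))
      Filter.atTop (nhds 0) := by
  constructor
  · exact entropy_calc hH (by exact_mod_cast hn) (key_star n hn) (trace_star n hn)
      (trace_sq_star n hn)
  · have h1 : Filter.Tendsto (fun m : ℕ => Real.log (((m:ℝ) - 1)/(m:ℝ)))
        Filter.atTop (nhds 0) := by
      have ht : Filter.Tendsto (fun m : ℕ => ((m:ℝ) - 1)/(m:ℝ)) Filter.atTop (nhds 1) := by
        have h0 := tendsto_one_div_atTop_nhds_zero_nat (𝕜 := ℝ)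
        have h2 : Filter.Tendsto (fun m : ℕ => 1 - 1/(m:ℝ)) Filter.atTop (nhds (1 - 0)) :=
          Filter.Tendsto.sub tendsto_const_nhds h0
        rw [sub_zero] at h2
        apply h2.congr'
        filter_upwards [Filter.eventually_ge_atTop 1] with m hm
        have hm0 : (m:ℝ) ≠ 0 := by positivity
        field_simp
      have hcont := (Real.continuousAt_log (by norm_num : (1:ℝ) ≠ 0)).tendsto
      have hcomp := hcont.comp ht
      simpa [Function.comp_def] using hcomp
    have h2 : Filter.Tendsto (fun m : ℕ => (2/(m:ℝ)) * Real.log 2) Filter.atTop (nhds 0) := by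
      have h0 : Filter.Tendsto (fun m : ℕ => (2:ℝ)/(m:ℝ)) Filter.atTop (nhds 0) :=
        tendsto_const_div_atTop_nhds_zero_nat 2
      simpa using h0.mul_const (Real.log 2)
    have hsum := h1.add h2
    rw [add_zero] at hsum
    apply hsum.congr'
    filter_upwards [Filter.eventually_ge_atTop 2] with m hm
    have hm0 : (m:ℝ) ≠ 0 := by positivity
    have hm1 : (m:ℝ) - 1 ≠ 0 := by
      have : (2:ℝ) ≤ m := by exact_mod_cast hm
      linarith
    rw [Real.log_div hm1 hm0]
    ring
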